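/- Let (X₁, X₂) be jointly Gaussian with variances ν₁₁, ν₂₂ and covariance ν₁₂. Then E[φ'(X₁)Φ(X₂)] = -(μ₁/(1+ν₁₁)) E[φ(X₁)Φ(X₂)] - (ν₁₂/(1+ν₁₁)) E[φ(X₁)φ(X₂)], where μ₁ = E[X₁]. -/

import Mathlib

open MeasureTheory ProbabilityTheory Real
open scoped NNReal ENNReal

noncomputable def npdf (x : ℝ) : ℝ := (Real.sqrt (2 * Real.pi))⁻¹ * Real.exp (-(x ^ 2) / 2)

noncomputable def ncdf (x : ℝ) : ℝ := ∫ t in Set.Iic x, npdf t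

noncomputable def P2 : Measure (ℝ × ℝ) :=
  (ProbabilityTheory.gaussianReal 0 1).prod (ProbabilityTheory.gaussianReal 0 1)

lemma npdf_nonneg (x : ℝ) : 0 ≤ npdf x := by unfold npdf; positivity

lemma sqrt2pi_inv_pos : 0 < (Real.sqrt (2 * Real.pi))⁻¹ := by positivity

lemma npdf_le (x : ℝ) : npdf x ≤ (Real.sqrt (2 * Real.pi))⁻¹ := by
  have h1 : Real.exp (-(x ^ 2) / 2) ≤ 1 := by
    rw [Real.exp_le_one_iff]; nlinarith [sq_nonneg x]
  have h0 : (0:ℝ) < (Real.sqrt (2 * Real.pi))⁻¹ := sqrt2pi_inv_pos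
  unfold npdf; nlinarith

@[continuity, fun_prop]
lemma continuous_npdf : Continuous npdf := by unfold npdf; fun_prop

lemma hasDerivAt_npdf (x : ℝ) : HasDerivAt npdf (-x * npdf x) x := by
  have h1 : HasDerivAt (fun y : ℝ => -(y ^ 2) / 2) (-x) x := by
    have h := ((hasDerivAt_pow 2 x).neg).div_const 2
    exact h.congr_deriv (by norm_num; ring)
  have h2 := (Real.hasDerivAt_exp (-(x ^ 2) / 2)).comp x h1
  have h3 := h2.const_mul ((Real.sqrt (2 * Real.pi))⁻¹)
  have e : npdf = fun y : ℝ => (Real.sqrt (2 * Real.pi))⁻¹ * Real.exp (-(y ^ 2) / 2) := rfl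
  rw [e]
  exact h3.congr_deriv (by beta_reduce; ring)

lemma deriv_npdf (x : ℝ) : deriv npdf x = -x * npdf x := (hasDerivAt_npdf x).deriv

lemma abs_mul_npdf_le (x : ℝ) : |x| * npdf x ≤ (Real.sqrt (2 * Real.pi))⁻¹ := by
  have h1 : |x| ≤ Real.exp (x ^ 2 / 2) := by
    have h2 := Real.add_one_le_exp (x ^ 2 / 2)
    nlinarith [sq_abs x, sq_nonneg (|x| - 1)]
  have h3 : |x| * Real.exp (-(x ^ 2) / 2) ≤ 1 := by
    have h4 : Real.exp (x ^ 2 / 2) * Real.exp (-(x ^ 2) / 2) = 1 := by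
      have e0 : x ^ 2 / 2 + -(x ^ 2) / 2 = 0 := by ring
      rw [← Real.exp_add, e0, Real.exp_zero]
    nlinarith [Real.exp_pos (-(x ^ 2) / 2), abs_nonneg x]
  have h0 : (0:ℝ) < (Real.sqrt (2 * Real.pi))⁻¹ := sqrt2pi_inv_pos
  unfold npdf; nlinarith [Real.exp_pos (-(x ^ 2) / 2), abs_nonneg x]

lemma abs_npdf_le (x : ℝ) : |npdf x| ≤ (Real.sqrt (2 * Real.pi))⁻¹ := by
  rw [abs_of_nonneg (npdf_nonneg x)]; exact npdf_le x

lemma abs_neg_mul_npdf_le (x : ℝ) : |(-x) * npdf x| ≤ (Real.sqrt (2 * Real.pi))⁻¹ := by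
  rw [abs_mul, abs_neg, abs_of_nonneg (npdf_nonneg x)]; exact abs_mul_npdf_le x

lemma npdf_eq : npdf = gaussianPDFReal 0 1 := by
  funext x
  simp [npdf, gaussianPDFReal]

lemma integrable_npdf : Integrable npdf := npdf_eq ▸ integrable_gaussianPDFReal 0 1

lemma integral_npdf : ∫ x, npdf x = 1 := by
  rw [npdf_eq]; exact integral_gaussianPDFReal_eq_one 0 one_ne_zero

lemma integrable_abs_mul_npdf : Integrable (fun x => |x| * npdf x) := by
  have h := (integrable_mul_exp_neg_mul_sq (b := (1:ℝ)/2) (by norm_num)).abs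
  have e : (fun x => |x| * npdf x)
      = fun x => (Real.sqrt (2 * Real.pi))⁻¹ * |x * Real.exp (-(1/2 : ℝ) * x ^ 2)| := by
    funext x
    rw [abs_mul, abs_of_pos (Real.exp_pos _)]
    have e2 : (-(1/2 : ℝ)) * x ^ 2 = -(x ^ 2) / 2 := by ring
    rw [e2]; unfold npdf; ring
  rw [e]
  exact h.const_mul _

lemma ncdf_nonneg (x : ℝ) : 0 ≤ ncdf x :=
  setIntegral_nonneg measurableSet_Iic fun t _ => npdf_nonneg t

lemma ncdf_le_one (x : ℝ) : ncdf x ≤ 1 := by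
  rw [← integral_npdf]
  exact setIntegral_le_integral integrable_npdf (Filter.Eventually.of_forall npdf_nonneg)

lemma abs_ncdf_le_one (x : ℝ) : |ncdf x| ≤ 1 := by
  rw [abs_of_nonneg (ncdf_nonneg x)]; exact ncdf_le_one x

lemma hasDerivAt_ncdf (x : ℝ) : HasDerivAt ncdf (npdf x) x := by
  have key : ncdf = fun y => ncdf 0 + ∫ t in (0:ℝ)..y, npdf t := by
    funext y
    have h := intervalIntegral.integral_Iic_sub_Iic (μ := volume) (f := npdf)
      (a := (0:ℝ)) (b := y) integrable_npdf.integrableOn integrable_npdf.integrableOn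
    simp only [ncdf]
    linarith
  have hd : HasDerivAt (fun u => ∫ t in (0:ℝ)..u, npdf t) (npdf x) x :=
    intervalIntegral.integral_hasDerivAt_right (integrable_npdf.intervalIntegrable)
      (continuous_npdf.stronglyMeasurable.stronglyMeasurableAtFilter)
      continuous_npdf.continuousAt
  rw [key]
  exact hd.const_add _

@[continuity, fun_prop]
lemma continuous_ncdf : Continuous ncdf :=
  continuous_iff_continuousAt.2 fun x => (hasDerivAt_ncdf x).continuousAt

lemma gauss_eq : gaussianReal 0 1
    = (volume : Measure ℝ).withDensity fun x => ((npdf x).toNNReal : ℝ≥0∞) := by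
  rw [gaussianReal_of_var_ne_zero _ one_ne_zero]
  congr 1
  funext x
  unfold gaussianPDF
  rw [← npdf_eq]
  rfl

lemma measurable_npdf_toNNReal : Measurable fun x => (npdf x).toNNReal :=
  continuous_npdf.measurable.real_toNNReal

lemma integral_gauss (f : ℝ → ℝ) :
    ∫ x, f x ∂(gaussianReal 0 1) = ∫ x, npdf x * f x := by
  rw [gauss_eq, integral_withDensity_eq_integral_smul measurable_npdf_toNNReal]
  congr 1
  funext x
  simp [NNReal.smul_def, Real.coe_toNNReal _ (npdf_nonneg x)]

lemma integrable_gauss_iff (f : ℝ → ℝ) :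
    Integrable f (gaussianReal 0 1) ↔ Integrable (fun x => npdf x * f x) volume := by
  rw [gauss_eq, integrable_withDensity_iff_integrable_smul measurable_npdf_toNNReal]
  constructor <;> intro h <;> refine h.congr (Filter.Eventually.of_forall fun x => ?_) <;>
    simp [NNReal.smul_def, Real.coe_toNNReal _ (npdf_nonneg x)]

lemma integrable_abs_id_gauss : Integrable (fun x : ℝ => |x|) (gaussianReal 0 1) := by
  rw [integrable_gauss_iff]
  exact integrable_abs_mul_npdf.congr (Filter.Eventually.of_forall fun x => by ring_nf)

lemma abs_mul3_le {a A q ca : ℝ} (hA : |A| ≤ ca) (hq : |q| ≤ 1) : |a * (A * q)| ≤ |a| * ca := by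
  rw [abs_mul, abs_mul]
  have h1 : |A| * |q| ≤ ca := by
    nlinarith [abs_nonneg A, abs_nonneg q, (abs_nonneg A).trans hA]
  exact mul_le_mul_of_nonneg_left h1 (abs_nonneg a)

lemma key1d (m v a b y : ℝ) :
    ∫ x, (a * (-(m + a * x) * npdf (m + a * x) * ncdf (v + b * x + y))
        + b * (npdf (m + a * x) * npdf (v + b * x + y))
        - x * npdf (m + a * x) * ncdf (v + b * x + y)) ∂(gaussianReal 0 1) = 0 := by
  rw [integral_gauss]
  set C : ℝ := (Real.sqrt (2 * Real.pi))⁻¹ with hC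
  have hCnn : (0:ℝ) ≤ C := le_of_lt sqrt2pi_inv_pos
  set g : ℝ → ℝ := fun x => npdf (m + a * x) * ncdf (v + b * x + y) * npdf x with hg
  set g' : ℝ → ℝ := fun x =>
    npdf x * (a * (-(m + a * x) * npdf (m + a * x) * ncdf (v + b * x + y))
        + b * (npdf (m + a * x) * npdf (v + b * x + y))
        - x * npdf (m + a * x) * ncdf (v + b * x + y)) with hg'
  have hderiv : ∀ x, HasDerivAt g (g' x) x := by
    intro x
    have l1 : HasDerivAt (fun x : ℝ => m + a * x) a x := by
      simpa using ((hasDerivAt_id x).const_mul a).const_add m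
    have l2 : HasDerivAt (fun x : ℝ => v + b * x + y) b x := by
      simpa using (((hasDerivAt_id x).const_mul b).const_add v).add_const y
    have h1 : HasDerivAt (fun x : ℝ => npdf (m + a * x))
        (-(m + a * x) * npdf (m + a * x) * a) x :=
      (hasDerivAt_npdf (m + a * x)).comp (h₂ := npdf) x l1
    have h2 : HasDerivAt (fun x : ℝ => ncdf (v + b * x + y))
        (npdf (v + b * x + y) * b) x :=
      (hasDerivAt_ncdf (v + b * x + y)).comp (h₂ := ncdf) x l2
    have h3 := (h1.mul h2).mul (hasDerivAt_npdf x)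
    refine h3.congr_deriv ?_
    simp only [hg', Pi.mul_apply]
    ring
  have hcont1 : Continuous fun x : ℝ => npdf (m + a * x) := by fun_prop
  have hcont2 : Continuous fun x : ℝ => ncdf (v + b * x + y) := by fun_prop
  have hcont3 : Continuous fun x : ℝ => npdf (v + b * x + y) := by fun_prop
  have hbound : ∀ x, |g' x| ≤ npdf x * (|a| * C + |b| * (C * C)) + |x| * npdf x * C := by
    intro x
    have hA : |(-(m + a * x)) * npdf (m + a * x)| ≤ C := abs_neg_mul_npdf_le (m + a * x)
    have hn1 : |npdf (m + a * x)| ≤ C := abs_npdf_le _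
    have hn2 : |npdf (v + b * x + y)| ≤ C := abs_npdf_le _
    have hqq : |ncdf (v + b * x + y)| ≤ 1 := abs_ncdf_le_one _
    have t1 : |a * (-(m + a * x) * npdf (m + a * x) * ncdf (v + b * x + y))| ≤ |a| * C :=
      abs_mul3_le hA hqq
    have t2 : |b * (npdf (m + a * x) * npdf (v + b * x + y))| ≤ |b| * (C * C) := by
      rw [abs_mul, abs_mul]
      exact mul_le_mul_of_nonneg_left
        (mul_le_mul hn1 hn2 (abs_nonneg _) hCnn) (abs_nonneg b)
    have t3 : |x * npdf (m + a * x) * ncdf (v + b * x + y)| ≤ |x| * C := by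
      have e : x * npdf (m + a * x) * ncdf (v + b * x + y)
          = x * (npdf (m + a * x) * ncdf (v + b * x + y)) := by ring
      rw [e]
      exact abs_mul3_le hn1 hqq
    have hE : |a * (-(m + a * x) * npdf (m + a * x) * ncdf (v + b * x + y))
        + b * (npdf (m + a * x) * npdf (v + b * x + y))
        - x * npdf (m + a * x) * ncdf (v + b * x + y)|
        ≤ |a| * C + |b| * (C * C) + |x| * C := by
      have u1 := abs_add_le (a * (-(m + a * x) * npdf (m + a * x) * ncdf (v + b * x + y)))
        (b * (npdf (m + a * x) * npdf (v + b * x + y)))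
      have u2 := abs_sub (a * (-(m + a * x) * npdf (m + a * x) * ncdf (v + b * x + y))
        + b * (npdf (m + a * x) * npdf (v + b * x + y)))
        (x * npdf (m + a * x) * ncdf (v + b * x + y))
      linarith
    simp only [hg']
    rw [abs_mul, abs_of_nonneg (npdf_nonneg x)]
    nlinarith [mul_le_mul_of_nonneg_left hE (npdf_nonneg x)]
  have hint_g' : Integrable g' := by
    refine Integrable.mono'
      (g := fun x => npdf x * (|a| * C + |b| * (C * C)) + |x| * npdf x * C)
      ((integrable_npdf.mul_const _).add (integrable_abs_mul_npdf.mul_const _))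
      ?_ (Filter.Eventually.of_forall fun x => ?_)
    · exact (continuous_npdf.mul (((continuous_const.mul ((((continuous_const.add
        (continuous_const.mul continuous_id)).neg.mul hcont1)).mul hcont2)).add
        (continuous_const.mul (hcont1.mul hcont3))).sub
        ((continuous_id.mul hcont1).mul hcont2))).aestronglyMeasurable
    · rw [Real.norm_eq_abs]
      exact hbound x
  have hint_g : Integrable g := by
    refine Integrable.mono' (integrable_npdf.const_mul C) ?_
      (Filter.Eventually.of_forall fun x => ?_)
    · exact ((hcont1.mul hcont2).mul continuous_npdf).aestronglyMeasurable
    · rw [Real.norm_eq_abs]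
      show |npdf (m + a * x) * ncdf (v + b * x + y) * npdf x| ≤ C * npdf x
      have e : npdf (m + a * x) * ncdf (v + b * x + y) * npdf x
          = npdf x * (npdf (m + a * x) * ncdf (v + b * x + y)) := by ring
      rw [e, abs_mul, abs_of_nonneg (npdf_nonneg x)]
      have h1 : |npdf (m + a * x) * ncdf (v + b * x + y)| ≤ C := by
        rw [abs_mul]
        nlinarith [abs_nonneg (npdf (m + a * x)), abs_nonneg (ncdf (v + b * x + y)),
          abs_npdf_le (m + a * x), abs_ncdf_le_one (v + b * x + y)]
      nlinarith [npdf_nonneg x, npdf_le x]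
  exact integral_eq_zero_of_hasDerivAt_of_integrable hderiv hint_g' hint_g

lemma isProb_P2 : IsProbabilityMeasure P2 := by
  unfold P2; infer_instance

lemma integrable_abs_fst_P2 : Integrable (fun w : ℝ × ℝ => |w.1|) P2 := by
  have h := integrable_abs_id_gauss.mul_prod (integrable_const (1:ℝ))
    (ν := gaussianReal 0 1)
  have e : (fun z : ℝ × ℝ => |z.1| * 1) = fun z : ℝ × ℝ => |z.1| := by
    funext z; ring
  rw [e] at h
  exact h

section Main

variable (μ₁ μ₂ a b c : ℝ)

lemma contZ : Continuous fun w : ℝ × ℝ => μ₂ + b * w.1 + c * w.2 := by fun_prop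

lemma contM : Continuous fun w : ℝ × ℝ => μ₁ + a * w.1 := by fun_prop

lemma I1 : Integrable (fun w : ℝ × ℝ =>
    -(μ₁ + a * w.1) * npdf (μ₁ + a * w.1) * ncdf (μ₂ + b * w.1 + c * w.2)) P2 := by
  have := isProb_P2
  refine Integrable.mono' (integrable_const ((Real.sqrt (2 * Real.pi))⁻¹)) ?_
    (Filter.Eventually.of_forall fun w => ?_)
  · exact (((contM μ₁ a).neg.mul (continuous_npdf.comp (contM μ₁ a))).mul
      (continuous_ncdf.comp (contZ μ₂ b c))).aestronglyMeasurable
  · rw [Real.norm_eq_abs]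
    have e : -(μ₁ + a * w.1) * npdf (μ₁ + a * w.1) * ncdf (μ₂ + b * w.1 + c * w.2)
        = (1:ℝ) * (-(μ₁ + a * w.1) * npdf (μ₁ + a * w.1) * ncdf (μ₂ + b * w.1 + c * w.2)) := by
      ring
    rw [e]
    simpa using abs_mul3_le (a := (1:ℝ)) (abs_neg_mul_npdf_le (μ₁ + a * w.1))
      (abs_ncdf_le_one (μ₂ + b * w.1 + c * w.2))

lemma I2 : Integrable (fun w : ℝ × ℝ =>
    npdf (μ₁ + a * w.1) * ncdf (μ₂ + b * w.1 + c * w.2)) P2 := by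
  have := isProb_P2
  refine Integrable.mono' (integrable_const ((Real.sqrt (2 * Real.pi))⁻¹)) ?_
    (Filter.Eventually.of_forall fun w => ?_)
  · exact ((continuous_npdf.comp (contM μ₁ a)).mul
      (continuous_ncdf.comp (contZ μ₂ b c))).aestronglyMeasurable
  · rw [Real.norm_eq_abs]
    have e : npdf (μ₁ + a * w.1) * ncdf (μ₂ + b * w.1 + c * w.2)
        = (1:ℝ) * (npdf (μ₁ + a * w.1) * ncdf (μ₂ + b * w.1 + c * w.2)) := by ring
    rw [e]
    simpa using abs_mul3_le (a := (1:ℝ)) (abs_npdf_le (μ₁ + a * w.1))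
      (abs_ncdf_le_one (μ₂ + b * w.1 + c * w.2))

lemma I3 : Integrable (fun w : ℝ × ℝ =>
    npdf (μ₁ + a * w.1) * npdf (μ₂ + b * w.1 + c * w.2)) P2 := by
  have := isProb_P2
  refine Integrable.mono'
    (integrable_const ((Real.sqrt (2 * Real.pi))⁻¹ * (Real.sqrt (2 * Real.pi))⁻¹)) ?_
    (Filter.Eventually.of_forall fun w => ?_)
  · exact ((continuous_npdf.comp (contM μ₁ a)).mul
      (continuous_npdf.comp (contZ μ₂ b c))).aestronglyMeasurable
  · rw [Real.norm_eq_abs, abs_mul]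
    exact mul_le_mul (abs_npdf_le _) (abs_npdf_le _) (abs_nonneg _)
      (le_of_lt sqrt2pi_inv_pos)

lemma I4 : Integrable (fun w : ℝ × ℝ =>
    w.1 * npdf (μ₁ + a * w.1) * ncdf (μ₂ + b * w.1 + c * w.2)) P2 := by
  refine Integrable.mono' (integrable_abs_fst_P2.mul_const ((Real.sqrt (2 * Real.pi))⁻¹)) ?_
    (Filter.Eventually.of_forall fun w => ?_)
  · exact ((continuous_fst.mul (continuous_npdf.comp (contM μ₁ a))).mul
      (continuous_ncdf.comp (contZ μ₂ b c))).aestronglyMeasurable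
  · rw [Real.norm_eq_abs]
    have e : w.1 * npdf (μ₁ + a * w.1) * ncdf (μ₂ + b * w.1 + c * w.2)
        = w.1 * (npdf (μ₁ + a * w.1) * ncdf (μ₂ + b * w.1 + c * w.2)) := by ring
    rw [e]
    exact abs_mul3_le (abs_npdf_le (μ₁ + a * w.1)) (abs_ncdf_le_one (μ₂ + b * w.1 + c * w.2))

lemma key2d :
    ∫ w : ℝ × ℝ, (a * (-(μ₁ + a * w.1) * npdf (μ₁ + a * w.1) * ncdf (μ₂ + b * w.1 + c * w.2))
        + b * (npdf (μ₁ + a * w.1) * npdf (μ₂ + b * w.1 + c * w.2))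
        - w.1 * npdf (μ₁ + a * w.1) * ncdf (μ₂ + b * w.1 + c * w.2)) ∂P2 = 0 := by
  have hF : Integrable (fun w : ℝ × ℝ =>
      a * (-(μ₁ + a * w.1) * npdf (μ₁ + a * w.1) * ncdf (μ₂ + b * w.1 + c * w.2))
        + b * (npdf (μ₁ + a * w.1) * npdf (μ₂ + b * w.1 + c * w.2))
        - w.1 * npdf (μ₁ + a * w.1) * ncdf (μ₂ + b * w.1 + c * w.2)) P2 :=
    (((I1 μ₁ μ₂ a b c).const_mul a).add ((I3 μ₁ μ₂ a b c).const_mul b)).sub (I4 μ₁ μ₂ a b c)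
  unfold P2 at hF ⊢
  rw [MeasureTheory.integral_prod_symm _ hF]
  have h0 : ∀ y : ℝ, (∫ x : ℝ,
      (a * (-(μ₁ + a * x) * npdf (μ₁ + a * x) * ncdf (μ₂ + b * x + c * y))
        + b * (npdf (μ₁ + a * x) * npdf (μ₂ + b * x + c * y))
        - x * npdf (μ₁ + a * x) * ncdf (μ₂ + b * x + c * y)) ∂(gaussianReal 0 1)) = 0 :=
    fun y => key1d μ₁ μ₂ a b (c * y)
  simp only [h0]
  simp

end Main

theorem gaussian_expectation_dnpdf_mul_ncdf (μ₁ μ₂ ν₁₁ ν₂₂ ν₁₂ a b c : ℝ)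
    (h11 : ν₁₁ = a ^ 2) (h22 : ν₂₂ = b ^ 2 + c ^ 2) (h12 : ν₁₂ = a * b) :
    ∫ w : ℝ × ℝ, deriv npdf (μ₁ + a * w.1) * ncdf (μ₂ + b * w.1 + c * w.2) ∂P2
      = -(μ₁ / (1 + ν₁₁)) *
          (∫ w : ℝ × ℝ, npdf (μ₁ + a * w.1) * ncdf (μ₂ + b * w.1 + c * w.2) ∂P2)
        - ν₁₂ / (1 + ν₁₁) *
          (∫ w : ℝ × ℝ, npdf (μ₁ + a * w.1) * npdf (μ₂ + b * w.1 + c * w.2) ∂P2) := by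
  simp only [deriv_npdf]
  rw [h11, h12]
  have hs := key2d μ₁ μ₂ a b c
  have hA : Integrable (fun w : ℝ × ℝ =>
      a * (-(μ₁ + a * w.1) * npdf (μ₁ + a * w.1) * ncdf (μ₂ + b * w.1 + c * w.2))) P2 :=
    (I1 μ₁ μ₂ a b c).const_mul a
  have hB : Integrable (fun w : ℝ × ℝ =>
      b * (npdf (μ₁ + a * w.1) * npdf (μ₂ + b * w.1 + c * w.2))) P2 :=
    (I3 μ₁ μ₂ a b c).const_mul b
  have hAB : Integrable (fun w : ℝ × ℝ =>
      a * (-(μ₁ + a * w.1) * npdf (μ₁ + a * w.1) * ncdf (μ₂ + b * w.1 + c * w.2))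
        + b * (npdf (μ₁ + a * w.1) * npdf (μ₂ + b * w.1 + c * w.2))) P2 := hA.add hB
  rw [integral_sub hAB (I4 μ₁ μ₂ a b c), integral_add hA hB,
    integral_const_mul, integral_const_mul] at hs
  have hL : (∫ w : ℝ × ℝ,
        -(μ₁ + a * w.1) * npdf (μ₁ + a * w.1) * ncdf (μ₂ + b * w.1 + c * w.2) ∂P2)
      = -μ₁ * (∫ w : ℝ × ℝ, npdf (μ₁ + a * w.1) * ncdf (μ₂ + b * w.1 + c * w.2) ∂P2)
        + -a * (∫ w : ℝ × ℝ,
            w.1 * npdf (μ₁ + a * w.1) * ncdf (μ₂ + b * w.1 + c * w.2) ∂P2) := by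
    have e : (fun w : ℝ × ℝ =>
        -(μ₁ + a * w.1) * npdf (μ₁ + a * w.1) * ncdf (μ₂ + b * w.1 + c * w.2))
        = fun w : ℝ × ℝ =>
          -μ₁ * (npdf (μ₁ + a * w.1) * ncdf (μ₂ + b * w.1 + c * w.2))
          + -a * (w.1 * npdf (μ₁ + a * w.1) * ncdf (μ₂ + b * w.1 + c * w.2)) := by
      funext w; ring
    have hX : Integrable (fun w : ℝ × ℝ =>
        -μ₁ * (npdf (μ₁ + a * w.1) * ncdf (μ₂ + b * w.1 + c * w.2))) P2 :=
      (I2 μ₁ μ₂ a b c).const_mul _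
    have hY : Integrable (fun w : ℝ × ℝ =>
        -a * (w.1 * npdf (μ₁ + a * w.1) * ncdf (μ₂ + b * w.1 + c * w.2))) P2 :=
      (I4 μ₁ μ₂ a b c).const_mul _
    rw [e, integral_add hX hY, integral_const_mul, integral_const_mul]
  have hne : (1:ℝ) + a ^ 2 ≠ 0 := by positivity
  have key : (1 + a ^ 2) * (∫ w : ℝ × ℝ,
        -(μ₁ + a * w.1) * npdf (μ₁ + a * w.1) * ncdf (μ₂ + b * w.1 + c * w.2) ∂P2)
      = -(μ₁ * (∫ w : ℝ × ℝ, npdf (μ₁ + a * w.1) * ncdf (μ₂ + b * w.1 + c * w.2) ∂P2))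
        - a * b * (∫ w : ℝ × ℝ,
            npdf (μ₁ + a * w.1) * npdf (μ₂ + b * w.1 + c * w.2) ∂P2) := by
    linear_combination hL + a * hs
  have h2 : (∫ w : ℝ × ℝ,
        -(μ₁ + a * w.1) * npdf (μ₁ + a * w.1) * ncdf (μ₂ + b * w.1 + c * w.2) ∂P2)
      = (-(μ₁ * (∫ w : ℝ × ℝ, npdf (μ₁ + a * w.1) * ncdf (μ₂ + b * w.1 + c * w.2) ∂P2))
        - a * b * (∫ w : ℝ × ℝ,
            npdf (μ₁ + a * w.1) * npdf (μ₂ + b * w.1 + c * w.2) ∂P2)) / (1 + a ^ 2) := by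
    rw [eq_div_iff hne]
    linear_combination key
  rw [h2]
  ring
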